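/- For n ≥ 0 and m ≥ 0, |S_1(n+1, m+1)|/n! = P_m(H_n^{(1)}, −H_n^{(2)}, …, (−1)^{m−1} H_n^{(m)}), where P_m are the modified Bell polynomials and H_n^{(j)} = Σ_{k=1}^n k^{−j}. -/

import Mathlib

open Real Finset

/-- The modified Bell polynomials `P_m`, evaluated on a sequence `x`, defined via the
generating function `exp(Σ_{n≥1} x_n tⁿ/n) = Σ_{m≥0} P_m(x_1,…,x_m) tᵐ`, equivalently
by the recurrence `P_0 = 1`, `P_m = (1/m) Σ_{j=1}^m x_j P_{m-j}`. -/
noncomputable def bellP (x : ℕ → ℝ) : ℕ → ℝ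
  | 0 => 1
  | m + 1 => (1 / ((m : ℝ) + 1)) *
      ∑ k ∈ Finset.range (m + 1), x (k + 1) * bellP x (m - k)
  decreasing_by all_goals (simp_wf; try omega)

/-- Elementary symmetric function `e_m(1, 1/2, …, 1/n)` defined by recurrence. -/
noncomputable def Esym : ℕ → ℕ → ℝ
  | 0, 0 => 1
  | 0, _ + 1 => 0
  | _ + 1, 0 => 1
  | n + 1, m + 1 => Esym n (m + 1) + (1 / ((n : ℝ) + 1)) * Esym n m

lemma Esym_zero (n : ℕ) : Esym n 0 = 1 := by cases n <;> rfl

lemma Esym_succ (n m : ℕ) :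
    Esym (n + 1) (m + 1) = Esym n (m + 1) + (1 / ((n : ℝ) + 1)) * Esym n m := rfl

lemma Esym_nonneg : ∀ n m, 0 ≤ Esym n m := by
  intro n
  induction n with
  | zero => intro m; cases m with
    | zero => norm_num [Esym]
    | succ m => norm_num [Esym]
  | succ n ih =>
    intro m
    cases m with
    | zero => rw [Esym_zero]; norm_num
    | succ m =>
      rw [Esym_succ]
      have h1 : (0:ℝ) ≤ 1 / ((n : ℝ) + 1) := by positivity
      exact add_nonneg (ih _) (mul_nonneg h1 (ih _))

lemma Esym_eq_zero : ∀ n m, n < m → Esym n m = 0 := by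
  intro n
  induction n with
  | zero =>
    intro m hm
    cases m with
    | zero => omega
    | succ m => rfl
  | succ n ih =>
    intro m hm
    cases m with
    | zero => omega
    | succ m =>
      rw [Esym_succ, ih (m + 1) (by omega), ih m (by omega)]
      ring

lemma bellP_sum (x : ℕ → ℝ) (m : ℕ) :
    ∑ k ∈ Finset.range m, x (k + 1) * bellP x (m - 1 - k) = (m : ℝ) * bellP x m := by
  cases m with
  | zero => simp
  | succ m =>
    rw [bellP]
    simp only [Nat.add_sub_cancel]
    push_cast
    rw [← mul_assoc, mul_one_div, div_self (by positivity), one_mul]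

lemma bellP_shift (x : ℕ → ℝ) (a : ℝ) (m : ℕ) :
    bellP (fun j => x j + (-1 : ℝ) ^ (j - 1) * a ^ j) m
      = bellP x m + a * (if m = 0 then 0 else bellP x (m - 1)) := by
  induction m using Nat.strong_induction_on with
  | _ m ih =>
    match m with
    | 0 => simp [bellP]
    | m + 1 =>
      rw [bellP]
      have step : ∀ k ∈ Finset.range (m + 1),
          (fun j => x j + (-1 : ℝ) ^ (j - 1) * a ^ j) (k + 1)
              * bellP (fun j => x j + (-1 : ℝ) ^ (j - 1) * a ^ j) (m - k)
          = x (k + 1) * bellP x (m - k)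
            + x (k + 1) * (a * (if m - k = 0 then 0 else bellP x (m - k - 1)))
            + ((-1 : ℝ) ^ k * a ^ (k + 1)) * bellP x (m - k)
            + ((-1 : ℝ) ^ k * a ^ (k + 1))
                * (a * (if m - k = 0 then 0 else bellP x (m - k - 1))) := by
        intro k hk
        rw [ih (m - k) (by omega)]
        simp only [Nat.add_sub_cancel]
        ring
      rw [Finset.sum_congr rfl step]
      simp only [Finset.sum_add_distrib]
      have h1 : ∑ k ∈ Finset.range (m + 1), x (k + 1) * bellP x (m - k)
          = ((m : ℝ) + 1) * bellP x (m + 1) := by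
        have := bellP_sum x (m + 1)
        simp only [Nat.add_sub_cancel] at this
        push_cast at this
        exact this
      have h2 : ∑ k ∈ Finset.range (m + 1),
            x (k + 1) * (a * (if m - k = 0 then 0 else bellP x (m - k - 1)))
          = a * ((m : ℝ) * bellP x m) := by
        rw [Finset.sum_range_succ, Nat.sub_self, if_pos rfl, mul_zero, mul_zero, add_zero]
        have hcong : ∀ k ∈ Finset.range m,
            x (k + 1) * (a * (if m - k = 0 then 0 else bellP x (m - k - 1)))
            = a * (x (k + 1) * bellP x (m - 1 - k)) := by
          intro k hk
          rw [Finset.mem_range] at hk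
          rw [if_neg (by omega), show m - k - 1 = m - 1 - k from by omega]
          ring
        rw [Finset.sum_congr rfl hcong, ← Finset.mul_sum, bellP_sum]
      have h4 : ∑ k ∈ Finset.range (m + 1),
            ((-1 : ℝ) ^ k * a ^ (k + 1)) * (a * (if m - k = 0 then 0 else bellP x (m - k - 1)))
          = ∑ k ∈ Finset.range m, (-1 : ℝ) ^ k * a ^ (k + 2) * bellP x (m - k - 1) := by
        rw [Finset.sum_range_succ, Nat.sub_self, if_pos rfl, mul_zero, mul_zero, add_zero]
        refine Finset.sum_congr rfl fun k hk => ?_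
        rw [Finset.mem_range] at hk
        rw [if_neg (by omega)]
        ring
      have h3 : ∑ k ∈ Finset.range (m + 1), ((-1 : ℝ) ^ k * a ^ (k + 1)) * bellP x (m - k)
          = (∑ k ∈ Finset.range m, -((-1 : ℝ) ^ k * a ^ (k + 2) * bellP x (m - k - 1)))
            + a * bellP x m := by
        rw [Finset.sum_range_succ' (fun k => ((-1 : ℝ) ^ k * a ^ (k + 1)) * bellP x (m - k)) m]
        congr 1
        · refine Finset.sum_congr rfl fun k hk => ?_
          rw [show m - (k + 1) = m - k - 1 from (Nat.sub_sub m k 1).symm]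
          ring
        · simp
      rw [h1, h2, h3, h4]
      have hz : (∑ k ∈ Finset.range m, -((-1 : ℝ) ^ k * a ^ (k + 2) * bellP x (m - k - 1)))
          + ∑ k ∈ Finset.range m, (-1 : ℝ) ^ k * a ^ (k + 2) * bellP x (m - k - 1) = 0 := by
        rw [← Finset.sum_add_distrib]
        simp
      have hm1 : (m : ℝ) + 1 ≠ 0 := by positivity
      rw [if_neg (Nat.succ_ne_zero m)]
      simp only [Nat.add_sub_cancel]
      field_simp
      nlinarith [hz]

lemma bellP_eq_Esym (n m : ℕ) :
    bellP (fun j => (-1 : ℝ) ^ (j - 1) * ∑ k ∈ Finset.range n, 1 / ((k : ℝ) + 1) ^ j) m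
      = Esym n m := by
  induction n generalizing m with
  | zero =>
    simp only [Finset.range_zero, Finset.sum_empty, mul_zero]
    cases m with
    | zero => rw [bellP]; rw [Esym_zero]
    | succ m =>
      rw [bellP, Esym_eq_zero 0 (m + 1) (by omega)]
      simp
  | succ n ih =>
    have hx : (fun j => (-1 : ℝ) ^ (j - 1) * ∑ k ∈ Finset.range (n + 1), 1 / ((k : ℝ) + 1) ^ j)
        = fun j => ((-1 : ℝ) ^ (j - 1) * ∑ k ∈ Finset.range n, 1 / ((k : ℝ) + 1) ^ j)
            + (-1 : ℝ) ^ (j - 1) * (1 / ((n : ℝ) + 1)) ^ j := by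
      funext j
      rw [Finset.sum_range_succ, div_pow, one_pow]
      push_cast
      ring
    rw [hx, bellP_shift, ih]
    cases m with
    | zero => simp [Esym_zero]
    | succ m =>
      rw [if_neg (Nat.succ_ne_zero m)]
      simp only [Nat.add_sub_cancel]
      rw [Esym_succ, ih]

/-- For `n ≥ 0` and `m ≥ 0`,
`|S_1(n+1, m+1)|/n! = P_m(H_n^{(1)}, -H_n^{(2)}, …, (-1)^{m-1} H_n^{(m)})`, where `S_1`
are the Stirling numbers of the first kind (defined by
`x(x-1)⋯(x-n+1) = Σ_{l=1}^n S_1(n,l) x^l`, with `S_1(n,l) = 0` for `l > n`), `P_m` are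
the modified Bell polynomials and `H_n^{(j)} = Σ_{k=1}^n k^{-j}`. -/
theorem stmt18 (S1 : ℕ → ℕ → ℝ)
    (hS1 : ∀ n : ℕ, 1 ≤ n → ∀ x : ℝ,
      ∏ i ∈ Finset.range n, (x - (i : ℝ)) = ∑ l ∈ Finset.Icc 1 n, S1 n l * x ^ l)
    (hS1zero : ∀ n l : ℕ, n < l → S1 n l = 0)
    (H : ℕ → ℕ → ℝ)
    (hH : ∀ n j : ℕ, H n j = ∑ k ∈ Finset.range n, 1 / ((k : ℝ) + 1) ^ j)
    (n m : ℕ) :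
    |S1 (n + 1) (m + 1)| / (n.factorial : ℝ) =
      bellP (fun j => (-1 : ℝ) ^ (j - 1) * H n j) m := by
  classical
  -- polynomial identity
  have hpoly : ∀ N : ℕ, 1 ≤ N →
      (∑ l ∈ Finset.Icc 1 N, Polynomial.C (S1 N l) * Polynomial.X ^ l)
        = ∏ i ∈ Finset.range N, (Polynomial.X - Polynomial.C (i : ℝ)) := by
    intro N hN
    apply Polynomial.funext
    intro x
    simp only [Polynomial.eval_finset_sum, Polynomial.eval_mul, Polynomial.eval_C,
      Polynomial.eval_pow, Polynomial.eval_X, Polynomial.eval_prod, Polynomial.eval_sub]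
    exact (hS1 N hN x).symm
  have hcoeff : ∀ N : ℕ, ∀ a : ℕ → ℝ, ∀ k : ℕ,
      (∑ l ∈ Finset.Icc 1 N, Polynomial.C (a l) * Polynomial.X ^ l).coeff k
        = if k ∈ Finset.Icc 1 N then a k else 0 := by
    intro N a k
    rw [Polynomial.finset_sum_coeff]
    simp only [Polynomial.coeff_C_mul, Polynomial.coeff_X_pow, mul_ite, mul_one, mul_zero]
    exact Finset.sum_ite_eq (Finset.Icc 1 N) k a
  have hc : ∀ N k : ℕ, 1 ≤ k →
      (∏ i ∈ Finset.range (N + 1), (Polynomial.X - Polynomial.C (i : ℝ))).coeff k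
        = S1 (N + 1) k := by
    intro N k hk
    rw [← hpoly (N + 1) (by omega), hcoeff]
    by_cases h : k ≤ N + 1
    · rw [if_pos (by rw [Finset.mem_Icc]; omega)]
    · rw [if_neg (by rw [Finset.mem_Icc]; omega), hS1zero _ _ (by omega)]
  have hrec : ∀ N k : ℕ, S1 (N + 2) (k + 2)
      = S1 (N + 1) (k + 1) - ((N : ℝ) + 1) * S1 (N + 1) (k + 2) := by
    intro N k
    rw [← hc (N + 1) (k + 2) (by omega), ← hc N (k + 1) (by omega),
      ← hc N (k + 2) (by omega)]
    rw [Finset.prod_range_succ]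
    have := Polynomial.coeff_mul_X_sub_C
      (p := ∏ i ∈ Finset.range (N + 1), (Polynomial.X - Polynomial.C (i : ℝ)))
      (r := ((N + 1 : ℕ) : ℝ)) (a := k + 1)
    push_cast at this ⊢
    linarith [this]
  have hcoeff0 : ∀ N : ℕ,
      (∏ i ∈ Finset.range (N + 1), (Polynomial.X - Polynomial.C (i : ℝ))).coeff 0 = 0 := by
    intro N
    rw [Polynomial.coeff_zero_eq_eval_zero, Polynomial.eval_prod]
    apply Finset.prod_eq_zero (Finset.mem_range.mpr (Nat.succ_pos N))
    simp
  have hfirst : ∀ N : ℕ, S1 (N + 2) 1 = -((N : ℝ) + 1) * S1 (N + 1) 1 := by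
    intro N
    rw [← hc (N + 1) 1 le_rfl, ← hc N 1 le_rfl]
    rw [Finset.prod_range_succ]
    have := Polynomial.coeff_mul_X_sub_C
      (p := ∏ i ∈ Finset.range (N + 1), (Polynomial.X - Polynomial.C (i : ℝ)))
      (r := ((N + 1 : ℕ) : ℝ)) (a := 0)
    rw [zero_add] at this
    rw [this, hcoeff0 N]
    push_cast
    ring
  have hone : S1 1 1 = 1 := by
    have h := hS1 1 le_rfl 1
    simp at h
    linarith [h]
  have key : ∀ N M : ℕ, S1 (N + 1) (M + 1)
      = (-1 : ℝ) ^ (N - M) * (N.factorial : ℝ) * Esym N M := by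
    intro N
    induction N with
    | zero =>
      intro M
      cases M with
      | zero => simp [hone, Esym_zero]
      | succ M =>
        rw [hS1zero 1 (M + 2) (by omega), Esym_eq_zero 0 (M + 1) (by omega)]
        ring
    | succ N ih =>
      intro M
      match M with
      | 0 =>
        rw [hfirst N, ih 0, Nat.sub_zero, Nat.sub_zero, Esym_zero, Esym_zero,
          Nat.factorial_succ, pow_succ]
        push_cast
        ring
      | M + 1 =>
        rw [hrec N M, ih M, ih (M + 1), Esym_succ]
        rcases lt_trichotomy M N with h | h | h
        · have h1 : N - M = (N - (M + 1)) + 1 := by omega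
          have h2 : N + 1 - (M + 1) = (N - (M + 1)) + 1 := by omega
          rw [h1, h2, pow_succ, Nat.factorial_succ]
          push_cast
          field_simp
          ring
        · subst h
          rw [Nat.sub_self, Esym_eq_zero M (M + 1) (by omega),
            show M + 1 - (M + 1) = 0 from by omega, Nat.factorial_succ]
          push_cast
          field_simp
          ring
        · rw [Esym_eq_zero N M (by omega), Esym_eq_zero N (M + 1) (by omega)]
          ring
  have hb : bellP (fun j => (-1 : ℝ) ^ (j - 1) * H n j) m = Esym n m := by
    have hfun : (fun j => (-1 : ℝ) ^ (j - 1) * H n j)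
        = fun j => (-1 : ℝ) ^ (j - 1) * ∑ k ∈ Finset.range n, 1 / ((k : ℝ) + 1) ^ j := by
      funext j
      rw [hH]
    rw [hfun, bellP_eq_Esym]
  rw [hb, key n m, abs_mul, abs_mul, abs_pow, abs_neg, abs_one, one_pow, one_mul,
    Nat.abs_cast, abs_of_nonneg (Esym_nonneg n m), mul_comm,
    mul_div_assoc, div_self (by positivity), mul_one]
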